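/- Let p, q be probability distributions on [k] with d_TV(p,q) > ε, let S ⊆ [k] be a set with q([k]∖S) ≤ ε/3 and p([k]∖S) ≤ ε/3, and define distributions p̃, q̃ on S ∪ {⊥} by p̃(x) = p(x) for x ∈ S, p̃(⊥) = p([k]∖S), and similarly for q̃. Then d_TV(p̃, q̃) > 2ε/3. -/
import Mathlib

theorem tail_collapse_preserves_tv (k : ℕ) (ε : ℝ)
    (p q : Fin k → ℝ)
    (hp0 : ∀ i, 0 ≤ p i) (hp1 : ∑ i, p i = 1)
    (hq0 : ∀ i, 0 ≤ q i) (hq1 : ∑ i, q i = 1)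
    (S : Finset (Fin k))
    (hqtail : ∑ i ∈ Sᶜ, q i ≤ ε / 3)
    (hptail : ∑ i ∈ Sᶜ, p i ≤ ε / 3)
    (htv : (1 / 2) * ∑ i, |p i - q i| > ε) :
    (1 / 2) * (∑ i ∈ S, |p i - q i| + |(∑ i ∈ Sᶜ, p i) - ∑ i ∈ Sᶜ, q i|)
      > 2 * ε / 3 := by
  have hsplit : ∑ i, |p i - q i| = ∑ i ∈ S, |p i - q i| + ∑ i ∈ Sᶜ, |p i - q i| :=
    (Finset.sum_add_sum_compl S _).symm
  have hbound : ∑ i ∈ Sᶜ, |p i - q i| ≤ ∑ i ∈ Sᶜ, p i + ∑ i ∈ Sᶜ, q i := by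
    rw [← Finset.sum_add_distrib]
    refine Finset.sum_le_sum fun i _ => ?_
    have := abs_sub (p i) (q i)
    calc |p i - q i| ≤ |p i| + |q i| := abs_sub _ _
      _ = p i + q i := by rw [abs_of_nonneg (hp0 i), abs_of_nonneg (hq0 i)]
  have habs : 0 ≤ |(∑ i ∈ Sᶜ, p i) - ∑ i ∈ Sᶜ, q i| := abs_nonneg _
  linarith
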